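/- Let (a_n)_{n=1}^∞ be a sequence of scalars satisfying Σ_{k=0}^∞ ( Σ_{n=ν_k+1}^{ν_{k+1}} |a_n|² (log₂ n)² )^{1/2} < ∞, where ν_k := 2^{2^k}. Then for every orthonormal system (φ_n)_{n=1}^∞ in L₂(X, dμ; H) the series Σ_{n=1}^∞ a_n φ_n(x) converges unconditionally μ-almost everywhere on X; that is, for every permutation σ of ℕ, the series Σ_{n=1}^∞ a_{σ(n)} φ_{σ(n)}(x) converges in the norm of H for μ-almost every x ∈ X (the exceptional null set may depend on σ). -/

import Mathlib

open MeasureTheory Filter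
open scoped ENNReal NNReal BigOperators

section TandoriAux

open Finset
open scoped InnerProductSpace ComplexConjugate

/-- Dyadic (Menshov–Rademacher type) pointwise bound: a "prefix" sum (in terms of a rank
function `r`) is bounded by the sum over dyadic levels of ℓ²-aggregated dyadic block sums. -/
lemma tandori_dyadic_bound {H : Type*} [NormedAddCommGroup H]
    (s : Finset ℕ) (v : ℕ → H) (r : ℕ → ℕ) (hr : ∀ n ∈ s, 1 ≤ r n)
    (L t : ℕ) (ht : t ≤ 2 ^ L) :
    ‖∑ n ∈ s.filter (fun n => r n ≤ t), v n‖ ≤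
      ∑ l ∈ Finset.range (L + 1), Real.sqrt (∑ q ∈ Finset.range (2 ^ L),
        ‖∑ n ∈ s.filter (fun n => 2 * q * 2 ^ l < r n ∧ r n ≤ 2 * q * 2 ^ l + 2 ^ l), v n‖ ^ 2) := by
  set c : ℕ → ℕ := fun l => 2 ^ l * (t / 2 ^ l) with hc
  have hc0 : c 0 = t := by simp [hc]
  have hcL : c (L + 1) = 0 := by
    have : t / 2 ^ (L + 1) = 0 := Nat.div_eq_of_lt (lt_of_le_of_lt ht (by
      have : (2:ℕ) ^ L < 2 ^ (L+1) := by
        exact Nat.pow_lt_pow_right one_lt_two (Nat.lt_succ_self L)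
      exact this))
    simp [hc, this]
  have hkey : ∀ l, c l = 2 * (t / 2 ^ (l + 1)) * 2 ^ l + (t / 2 ^ l % 2) * 2 ^ l := by
    intro l
    have h1 : t / 2 ^ (l + 1) = t / 2 ^ l / 2 := by
      rw [pow_succ, Nat.div_div_eq_div_mul]
    have h2 : t / 2 ^ l = 2 * (t / 2 ^ l / 2) + t / 2 ^ l % 2 := by omega
    calc c l = 2 ^ l * (t / 2 ^ l) := rfl
    _ = 2 ^ l * (2 * (t / 2 ^ l / 2) + t / 2 ^ l % 2) := by rw [← h2]
    _ = 2 * (t / 2 ^ (l + 1)) * 2 ^ l + (t / 2 ^ l % 2) * 2 ^ l := by rw [h1]; ring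
  have hcsucc : ∀ l, c (l + 1) = 2 * (t / 2 ^ (l + 1)) * 2 ^ l := by
    intro l
    calc c (l+1) = 2 ^ (l+1) * (t / 2 ^ (l+1)) := rfl
    _ = 2 * (t / 2 ^ (l + 1)) * 2 ^ l := by ring
  have hmono : ∀ l, c (l + 1) ≤ c l := by
    intro l
    rw [hcsucc l, hkey l]
    exact Nat.le_add_right _ _
  have htel : ∀ l, ∑ n ∈ s.filter (fun n => r n ≤ c l), v n
      = (∑ n ∈ s.filter (fun n => r n ≤ c (l + 1)), v n)
        + ∑ n ∈ s.filter (fun n => c (l + 1) < r n ∧ r n ≤ c l), v n := by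
    intro l
    rw [← Finset.sum_union]
    · congr 1
      ext n
      simp only [Finset.mem_union, Finset.mem_filter]
      constructor
      · rintro ⟨hn, hle⟩
        rcases le_or_gt (r n) (c (l+1)) with h | h
        · exact Or.inl ⟨hn, h⟩
        · exact Or.inr ⟨hn, h, hle⟩
      · rintro (⟨hn, h⟩ | ⟨hn, h1, h2⟩)
        · exact ⟨hn, le_trans h (hmono l)⟩
        · exact ⟨hn, h2⟩
    · rw [Finset.disjoint_left]
      intro n hn hn'
      simp only [Finset.mem_filter] at hn hn'
      omega
  have hmain : ∑ n ∈ s.filter (fun n => r n ≤ t), v n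
      = ∑ l ∈ Finset.range (L + 1), ∑ n ∈ s.filter (fun n => c (l + 1) < r n ∧ r n ≤ c l), v n := by
    have : ∀ M : ℕ, ∑ n ∈ s.filter (fun n => r n ≤ c 0), v n
        = (∑ n ∈ s.filter (fun n => r n ≤ c M), v n)
          + ∑ l ∈ Finset.range M, ∑ n ∈ s.filter (fun n => c (l + 1) < r n ∧ r n ≤ c l), v n := by
      intro M
      induction M with
      | zero => simp
      | succ M ih =>
        rw [ih, htel M, Finset.sum_range_succ]
        abel
    have h0 : s.filter (fun n => r n ≤ c (L + 1)) = ∅ := by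
      rw [hcL]
      apply Finset.filter_false_of_mem
      intro n hn
      have := hr n hn
      omega
    rw [hc0] at this
    rw [this (L + 1), h0]
    simp
  rw [hmain]
  refine le_trans (norm_sum_le _ _) (Finset.sum_le_sum ?_)
  intro l hl
  set q := t / 2 ^ (l + 1) with hq
  have hqlt : q < 2 ^ L := by
    have h1 : q ≤ t / 2 := by
      apply Nat.div_le_div_left
      · have : (2:ℕ) ^ 1 ≤ 2 ^ (l + 1) := Nat.pow_le_pow_right (by norm_num) (by omega)
        simpa using this
      · norm_num
    have h2 : t / 2 < 2 ^ L := by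
      apply Nat.div_lt_of_lt_mul
      have := Nat.two_pow_pos L
      omega
    omega
  have hbit : t / 2 ^ l % 2 = 0 ∨ t / 2 ^ l % 2 = 1 := by omega
  rcases hbit with hb | hb
  · have hempty : s.filter (fun n => c (l + 1) < r n ∧ r n ≤ c l) = ∅ := by
      apply Finset.filter_false_of_mem
      intro n hn
      have h1 := hkey l
      have h2 := hcsucc l
      rw [hb] at h1
      simp at h1
      omega
    rw [hempty]
    simp only [Finset.sum_empty, norm_zero]
    apply Real.sqrt_nonneg
  · have hset : s.filter (fun n => c (l + 1) < r n ∧ r n ≤ c l)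
        = s.filter (fun n => 2 * q * 2 ^ l < r n ∧ r n ≤ 2 * q * 2 ^ l + 2 ^ l) := by
      have h1 := hkey l
      have h2 := hcsucc l
      rw [hb] at h1
      simp only [one_mul] at h1
      rw [h2, ← hq] at *
      congr 1
      ext n
      rw [hq] at h1 h2 ⊢
      omega
    rw [hset]
    have : ‖∑ n ∈ s.filter (fun n => 2 * q * 2 ^ l < r n ∧ r n ≤ 2 * q * 2 ^ l + 2 ^ l), v n‖
        = Real.sqrt (‖∑ n ∈ s.filter (fun n => 2 * q * 2 ^ l < r n ∧ r n ≤ 2 * q * 2 ^ l + 2 ^ l), v n‖ ^ 2) := by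
      rw [Real.sqrt_sq (norm_nonneg _)]
    rw [this]
    apply Real.sqrt_le_sqrt
    exact Finset.single_le_sum (fun i _ => sq_nonneg _ : ∀ i ∈ Finset.range (2^L), 0 ≤ ‖∑ n ∈ s.filter (fun n => 2 * i * 2 ^ l < r n ∧ r n ≤ 2 * i * 2 ^ l + 2 ^ l), v n‖ ^ 2) (Finset.mem_range.mpr hqlt)

/-- A rank-based description of the sets `{n ∈ s : f n ≤ m}`. -/
lemma tandori_rank_filter_eq (s : Finset ℕ) (f : ℕ → ℕ) (m : ℕ) :
    s.filter (fun n => f n ≤ m)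
      = s.filter (fun n => (s.filter (fun n' => f n' ≤ f n)).card
          ≤ (s.filter (fun n => f n ≤ m)).card) := by
  ext n
  simp only [Finset.mem_filter]
  constructor
  · rintro ⟨hn, hle⟩
    refine ⟨hn, Finset.card_le_card ?_⟩
    intro n' hn'
    simp only [Finset.mem_filter] at hn' ⊢
    exact ⟨hn'.1, le_trans hn'.2 hle⟩
  · rintro ⟨hn, hcard⟩
    refine ⟨hn, ?_⟩
    by_contra hgt
    push_neg at hgt
    have hsub : insert n (s.filter (fun n' => f n' ≤ m)) ⊆ s.filter (fun n' => f n' ≤ f n) := by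
      intro n' hn'
      rcases Finset.mem_insert.mp hn' with h | h
      · subst h; exact Finset.mem_filter.mpr ⟨hn, le_refl _⟩
      · simp only [Finset.mem_filter] at h ⊢
        exact ⟨h.1, le_trans h.2 (le_of_lt hgt)⟩
    have hnotmem : n ∉ s.filter (fun n' => f n' ≤ m) := by
      simp only [Finset.mem_filter]
      rintro ⟨-, h⟩
      omega
    have := Finset.card_le_card hsub
    rw [Finset.card_insert_of_notMem hnotmem] at this
    omega

variable {X : Type*} [MeasurableSpace X] {μ : Measure X}

/-- If a sequence of nonnegative functions has summable `L²` norm bounds,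
then it is a.e. summable. -/
lemma tandori_ae_summable (W : ℕ → X → ℝ)
    (hW : ∀ k, AEStronglyMeasurable (W k) μ)
    (hnn : ∀ k x, 0 ≤ W k x) (B : ℕ → ℝ≥0∞)
    (hB : ∀ k, eLpNorm (W k) 2 μ ≤ B k) (hsum : ∑' k, B k ≠ ⊤) :
    ∀ᵐ x ∂μ, Summable (fun k => W k x) := by
  set C := ∑' k, B k with hC
  have hFK : ∀ K : ℕ, eLpNorm (fun x => ∑ k ∈ Finset.range K, W k x) 2 μ ≤ C := by
    intro K
    have h0 : (fun x => ∑ k ∈ Finset.range K, W k x) = ∑ k ∈ Finset.range K, W k := by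
      funext x; simp
    have h1 : eLpNorm (∑ k ∈ Finset.range K, W k) 2 μ ≤ ∑ k ∈ Finset.range K, eLpNorm (W k) 2 μ :=
      eLpNorm_sum_le (fun k _ => hW k) one_le_two
    rw [h0]
    refine le_trans h1 (le_trans (Finset.sum_le_sum fun k _ => hB k) (ENNReal.sum_le_tsum _))
  set G : X → ℝ≥0∞ := fun x => ∑' k, ENNReal.ofReal (W k x) with hG
  have hGK : ∀ x, G x = ⨆ K, ∑ k ∈ Finset.range K, ENNReal.ofReal (W k x) := fun x =>
    ENNReal.tsum_eq_iSup_nat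
  have hmeas : ∀ K : ℕ, AEMeasurable (fun x => (∑ k ∈ Finset.range K, ENNReal.ofReal (W k x)) ^ 2) μ := by
    intro K
    exact (Finset.aemeasurable_fun_sum _ fun k _ =>
      (ENNReal.measurable_ofReal.comp_aemeasurable (hW k).aemeasurable)).pow_const 2
  have hlin : ∫⁻ x, (G x) ^ 2 ∂μ ≤ C ^ 2 := by
    have hmono : ∀ᵐ x ∂μ, Monotone fun K => (∑ k ∈ Finset.range K, ENNReal.ofReal (W k x)) ^ 2 := by
      filter_upwards with x
      intro i j hij
      exact pow_le_pow_left' (Finset.sum_le_sum_of_subset (Finset.range_subset_range.mpr hij)) 2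
    have h1 : ∫⁻ x, (G x) ^ 2 ∂μ
        = ⨆ K, ∫⁻ x, (∑ k ∈ Finset.range K, ENNReal.ofReal (W k x)) ^ 2 ∂μ := by
      rw [← lintegral_iSup' hmeas hmono]
      refine lintegral_congr fun x => ?_
      rw [hGK x]
      exact Monotone.map_iSup_of_continuousAt ((ENNReal.continuous_pow 2).continuousAt)
        (fun u v huv => pow_le_pow_left' huv 2) (by simp)
    rw [h1]
    refine iSup_le fun K => ?_
    have h2 : ∫⁻ x, (∑ k ∈ Finset.range K, ENNReal.ofReal (W k x)) ^ 2 ∂μ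
        = (eLpNorm (fun x => ∑ k ∈ Finset.range K, W k x) 2 μ) ^ 2 := by
      rw [eLpNorm_eq_lintegral_rpow_enorm_toReal two_ne_zero ENNReal.ofNat_ne_top]
      rw [← ENNReal.rpow_natCast _ 2]
      rw [← ENNReal.rpow_mul]
      have h3 : (1 / (2:ℝ≥0∞).toReal) * (2:ℕ) = 1 := by norm_num
      rw [h3, ENNReal.rpow_one]
      refine lintegral_congr fun x => ?_
      have h4 : ENNReal.ofReal (∑ k ∈ Finset.range K, W k x)
          = ∑ k ∈ Finset.range K, ENNReal.ofReal (W k x) :=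
        ENNReal.ofReal_sum_of_nonneg fun k _ => hnn k x
      rw [← h4]
      rw [← ofReal_norm]
      rw [Real.norm_of_nonneg (Finset.sum_nonneg fun k _ => hnn k x)]
      rw [← ENNReal.rpow_natCast]
      norm_num
    rw [h2]
    exact pow_le_pow_left' (hFK K) 2
  have hfin : ∀ᵐ x ∂μ, G x ^ 2 < ⊤ := by
    refine ae_lt_top' ?_ (lt_of_le_of_lt hlin ?_).ne
    · exact ((AEMeasurable.ennreal_tsum fun k =>
        ENNReal.measurable_ofReal.comp_aemeasurable (hW k).aemeasurable).pow_const 2)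
    · exact ENNReal.pow_lt_top (lt_of_le_of_ne le_top hsum)
  filter_upwards [hfin] with x hx
  have hGx : G x ≠ ⊤ := by
    intro h
    rw [h] at hx
    exact absurd hx (by simp)
  have := ENNReal.summable_toReal hGx
  refine this.congr fun k => ?_
  exact ENNReal.toReal_ofReal (hnn k x)

variable {𝕜 : Type*} [RCLike 𝕜] {H : Type*} [NormedAddCommGroup H] [InnerProductSpace 𝕜 H]

local notation "⟪" x ", " y "⟫" => @inner 𝕜 _ _ x y

lemma tandori_memLp_inner_integrable {f g : X → H} (hf : MemLp f 2 μ) (hg : MemLp g 2 μ) :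
    Integrable (fun x => (⟪f x, g x⟫ : 𝕜)) μ := by
  have h := L2.integrable_inner (𝕜 := 𝕜) (hf.toLp f) (hg.toLp g)
  refine h.congr ?_
  filter_upwards [hf.coeFn_toLp, hg.coeFn_toLp] with x h1 h2
  rw [h1, h2]

lemma tandori_integral_norm_sq_sum (a : ℕ → 𝕜) (φ : ℕ → X → H)
    (hmem : ∀ n, 1 ≤ n → MemLp (φ n) 2 μ)
    (horth : ∀ n m, 1 ≤ n → 1 ≤ m →
      ∫ x, (inner 𝕜 (φ n x) (φ m x) : 𝕜) ∂μ = if n = m then (1 : 𝕜) else 0)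
    (D : Finset ℕ) (hD : ∀ n ∈ D, 1 ≤ n) :
    ∫ x, ‖∑ n ∈ D, a n • φ n x‖ ^ 2 ∂μ = ∑ n ∈ D, ‖a n‖ ^ 2 := by
  have hint : ∀ i ∈ D, ∀ j ∈ D, Integrable (fun x => ⟪a i • φ i x, a j • φ j x⟫) μ := by
    intro i hi j hj
    have : Integrable (fun x => ⟪φ i x, φ j x⟫) μ :=
      tandori_memLp_inner_integrable (hmem i (hD i hi)) (hmem j (hD j hj))
    refine (this.const_mul (conj (a i) * a j)).congr ?_
    filter_upwards with x
    rw [inner_smul_left, inner_smul_right, mul_assoc]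
  have hinner : ∀ x, (‖∑ n ∈ D, a n • φ n x‖ : ℝ) ^ 2
      = RCLike.re (⟪∑ n ∈ D, a n • φ n x, ∑ n ∈ D, a n • φ n x⟫) := by
    intro x
    rw [inner_self_eq_norm_sq]
  have hIsum : Integrable (fun x => ⟪∑ n ∈ D, a n • φ n x, ∑ n ∈ D, a n • φ n x⟫) μ := by
    have : (fun x => ⟪∑ n ∈ D, a n • φ n x, ∑ n ∈ D, a n • φ n x⟫)
        = fun x => ∑ i ∈ D, ∑ j ∈ D, ⟪a i • φ i x, a j • φ j x⟫ := by
      funext x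
      rw [sum_inner]
      exact Finset.sum_congr rfl fun i _ => by rw [inner_sum]
    rw [this]
    exact integrable_finset_sum _ fun i hi => integrable_finset_sum _ fun j hj => hint i hi j hj
  calc ∫ x, ‖∑ n ∈ D, a n • φ n x‖ ^ 2 ∂μ
      = ∫ x, RCLike.re (⟪∑ n ∈ D, a n • φ n x, ∑ n ∈ D, a n • φ n x⟫) ∂μ := by
        simp_rw [hinner]
    _ = RCLike.re (∫ x, ⟪∑ n ∈ D, a n • φ n x, ∑ n ∈ D, a n • φ n x⟫ ∂μ) :=
        integral_re hIsum
    _ = ∑ n ∈ D, ‖a n‖ ^ 2 := by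
        have : (∫ x, ⟪∑ n ∈ D, a n • φ n x, ∑ n ∈ D, a n • φ n x⟫ ∂μ)
            = ∑ i ∈ D, ∑ j ∈ D, (conj (a i) * a j) * ∫ x, ⟪φ i x, φ j x⟫ ∂μ := by
          have h1 : (fun x => ⟪∑ n ∈ D, a n • φ n x, ∑ n ∈ D, a n • φ n x⟫)
              = fun x => ∑ i ∈ D, ∑ j ∈ D, (conj (a i) * a j) * ⟪φ i x, φ j x⟫ := by
            funext x
            rw [sum_inner]
            refine Finset.sum_congr rfl fun i _ => ?_
            rw [inner_sum]
            refine Finset.sum_congr rfl fun j _ => ?_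
            rw [inner_smul_left, inner_smul_right, mul_assoc]
          rw [h1, integral_finset_sum]
          · refine Finset.sum_congr rfl fun i hi => ?_
            rw [integral_finset_sum]
            · refine Finset.sum_congr rfl fun j hj => ?_
              rw [integral_const_mul]
            · intro j hj
              exact ((tandori_memLp_inner_integrable (hmem i (hD i hi)) (hmem j (hD j hj))).const_mul _)
          · intro i hi
            exact integrable_finset_sum _ fun j hj =>
              ((tandori_memLp_inner_integrable (hmem i (hD i hi)) (hmem j (hD j hj))).const_mul _)
        rw [this]
        have h2 : ∀ i ∈ D, ∑ j ∈ D, (conj (a i) * a j) * ∫ x, ⟪φ i x, φ j x⟫ ∂μ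
            = (‖a i‖ : 𝕜) ^ 2 := by
          intro i hi
          rw [Finset.sum_eq_single i]
          · rw [horth i i (hD i hi) (hD i hi)]
            simp [RCLike.conj_mul, RCLike.normSq_eq_def']
          · intro j hj hne
            rw [horth i j (hD i hi) (hD j hj), if_neg (by exact fun h => hne h.symm)]
            ring
          · intro h; exact absurd hi h
        rw [Finset.sum_congr rfl h2]
        have h3 : (∑ n ∈ D, (‖a n‖ : 𝕜) ^ 2) = ((∑ n ∈ D, ‖a n‖ ^ 2 : ℝ) : 𝕜) := by
          push_cast; ring
        rw [h3, RCLike.ofReal_re]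

lemma tandori_integrable_norm_sq_sum (a : ℕ → 𝕜) (φ : ℕ → X → H)
    (hmem : ∀ n, 1 ≤ n → MemLp (φ n) 2 μ) (D : Finset ℕ) (hD : ∀ n ∈ D, 1 ≤ n) :
    Integrable (fun x => ‖∑ n ∈ D, a n • φ n x‖ ^ 2) μ := by
  have hF : MemLp (fun x => ∑ n ∈ D, a n • φ n x) 2 μ := by
    have h0 := memLp_finset_sum' D fun n hn => (hmem n (hD n hn)).const_smul (a n)
    exact h0.ae_eq (Filter.Eventually.of_forall fun x => by simp)
  have h := (tandori_memLp_inner_integrable (𝕜 := 𝕜) hF hF).re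
  refine h.congr ?_
  filter_upwards with x
  rw [← inner_self_eq_norm_sq (𝕜 := 𝕜)]

lemma tandori_eLpNorm_sqrt_block_le (a : ℕ → 𝕜) (φ : ℕ → X → H)
    (hmem : ∀ n, 1 ≤ n → MemLp (φ n) 2 μ)
    (horth : ∀ n m, 1 ≤ n → 1 ≤ m →
      ∫ x, (inner 𝕜 (φ n x) (φ m x) : 𝕜) ∂μ = if n = m then (1 : 𝕜) else 0)
    (Δ : Finset ℕ) (hΔ : ∀ n ∈ Δ, 1 ≤ n) (Q : ℕ) (D : ℕ → Finset ℕ)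
    (hD : ∀ q, D q ⊆ Δ)
    (hdisj : ∀ q q', q ≠ q' → Disjoint (D q) (D q')) :
    eLpNorm (fun x => Real.sqrt (∑ q ∈ Finset.range Q, ‖∑ n ∈ D q, a n • φ n x‖ ^ 2)) 2 μ
      ≤ ENNReal.ofReal (Real.sqrt (∑ n ∈ Δ, ‖a n‖ ^ 2)) := by
  have hDmem : ∀ q, ∀ n ∈ D q, 1 ≤ n := fun q n hn => hΔ n (hD q hn)
  have hint : Integrable (fun x => ∑ q ∈ Finset.range Q, ‖∑ n ∈ D q, a n • φ n x‖ ^ 2) μ :=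
    integrable_finset_sum _ fun q _ => tandori_integrable_norm_sq_sum a φ hmem (D q) (hDmem q)
  have hnn : ∀ x, 0 ≤ ∑ q ∈ Finset.range Q, ‖∑ n ∈ D q, a n • φ n x‖ ^ 2 :=
    fun x => Finset.sum_nonneg fun q _ => sq_nonneg _
  rw [eLpNorm_eq_lintegral_rpow_enorm_toReal two_ne_zero ENNReal.ofNat_ne_top]
  have h1 : ∀ x : X, ‖Real.sqrt (∑ q ∈ Finset.range Q, ‖∑ n ∈ D q, a n • φ n x‖ ^ 2)‖ₑ
      ^ (2 : ℝ≥0∞).toReal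
      = ENNReal.ofReal (∑ q ∈ Finset.range Q, ‖∑ n ∈ D q, a n • φ n x‖ ^ 2) := by
    intro x
    rw [← ofReal_norm, Real.norm_of_nonneg (Real.sqrt_nonneg _)]
    have h2 : (2 : ℝ≥0∞).toReal = ((2 : ℕ) : ℝ) := by norm_num
    rw [h2, ENNReal.rpow_natCast, ← ENNReal.ofReal_pow (Real.sqrt_nonneg _),
      Real.sq_sqrt (hnn x)]
  simp_rw [h1]
  rw [← ofReal_integral_eq_lintegral_ofReal hint (Filter.Eventually.of_forall hnn)]
  rw [integral_finset_sum _ fun q _ => tandori_integrable_norm_sq_sum a φ hmem (D q) (hDmem q)]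
  have h3 : ∀ q ∈ Finset.range Q, ∫ x, ‖∑ n ∈ D q, a n • φ n x‖ ^ 2 ∂μ
      = ∑ n ∈ D q, ‖a n‖ ^ 2 := fun q _ =>
    tandori_integral_norm_sq_sum a φ hmem horth (D q) (hDmem q)
  rw [Finset.sum_congr rfl h3]
  have h4 : ∑ q ∈ Finset.range Q, ∑ n ∈ D q, ‖a n‖ ^ 2 ≤ ∑ n ∈ Δ, ‖a n‖ ^ 2 := by
    rw [← Finset.sum_biUnion]
    · exact Finset.sum_le_sum_of_subset_of_nonneg
        (Finset.biUnion_subset.mpr fun q _ => hD q) (fun n _ _ => sq_nonneg _)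
    · intro q _ q' _ hne
      exact hdisj q q' hne
  calc ENNReal.ofReal (∑ q ∈ Finset.range Q, ∑ n ∈ D q, ‖a n‖ ^ 2) ^ (1 / (2:ℝ≥0∞).toReal)
      ≤ ENNReal.ofReal (∑ n ∈ Δ, ‖a n‖ ^ 2) ^ (1 / (2:ℝ≥0∞).toReal) := by
        gcongr
    _ = ENNReal.ofReal (Real.sqrt (∑ n ∈ Δ, ‖a n‖ ^ 2)) := by
        have hs : (0:ℝ) ≤ ∑ n ∈ Δ, ‖a n‖ ^ 2 := Finset.sum_nonneg fun n _ => sq_nonneg _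
        rw [Real.sqrt_eq_rpow, ← ENNReal.ofReal_rpow_of_nonneg hs (by norm_num)]
        norm_num

lemma tandori_nu_mono {i j : ℕ} (h : i ≤ j) : (2:ℕ) ^ 2 ^ i ≤ 2 ^ 2 ^ j :=
  Nat.pow_le_pow_right (by norm_num) (Nat.pow_le_pow_right (by norm_num) h)

lemma tandori_nu_cover : ∀ K' K n : ℕ, K ≤ K' → 2 ^ 2 ^ K < n → n ≤ 2 ^ 2 ^ K' →
    ∃ k, K ≤ k ∧ k < K' ∧ 2 ^ 2 ^ k < n ∧ n ≤ 2 ^ 2 ^ (k + 1) := by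
  intro K'
  induction K' with
  | zero =>
    intro K n hK h1 h2
    have : K = 0 := by omega
    subst this
    omega
  | succ K' ih =>
    intro K n hK h1 h2
    by_cases h : n ≤ 2 ^ 2 ^ K'
    · have hKK' : K ≤ K' := by
        by_contra hc
        have hK' : K = K' + 1 := by omega
        subst hK'
        omega
      obtain ⟨k, hk1, hk2, hk3⟩ := ih K n hKK' h1 h
      exact ⟨k, hk1, Nat.lt_succ_of_lt hk2, hk3⟩
    · push_neg at h
      have hKK' : K ≤ K' := by
        by_contra hc
        have hK' : K = K' + 1 := by omega
        subst hK'
        omega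
      exact ⟨K', hKK', Nat.lt_succ_self _, h, h2⟩

end TandoriAux

/-- General Tandori theorem: unconditional a.e. convergence of the orthogonal series. -/
theorem tandori_unconditional_ae_convergence
    {X : Type*} [MeasurableSpace X] (μ : Measure X)
    {𝕜 : Type*} [RCLike 𝕜]
    {H : Type*} [NormedAddCommGroup H] [InnerProductSpace 𝕜 H] [CompleteSpace H]
    (a : ℕ → 𝕜) (φ : ℕ → X → H)
    (hmem : ∀ n, 1 ≤ n → MemLp (φ n) 2 μ)
    (horth : ∀ n m, 1 ≤ n → 1 ≤ m →
      ∫ x, (inner 𝕜 (φ n x) (φ m x) : 𝕜) ∂μ = if n = m then (1 : 𝕜) else 0)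
    (hA : Summable fun k : ℕ =>
      Real.sqrt (∑ n ∈ Finset.Icc (2 ^ 2 ^ k + 1) (2 ^ 2 ^ (k + 1)),
        ‖a n‖ ^ 2 * (Real.logb 2 (n : ℝ)) ^ 2)) :
    ∀ σ : Equiv.Perm ℕ, σ 0 = 0 →
      ∀ᵐ x ∂μ, ∃ l : H,
        Tendsto (fun m : ℕ => ∑ n ∈ Finset.Icc 1 m, a (σ n) • φ (σ n) x) atTop (nhds l) := by
  intro σ hσ0
  classical
  set ν : ℕ → ℕ := fun k => 2 ^ 2 ^ k with hν
  set Δ : ℕ → Finset ℕ := fun k => Finset.Icc (ν k + 1) (ν (k + 1)) with hΔdef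
  set rk : ℕ → ℕ → ℕ :=
    fun k n => ((Δ k).filter (fun n' => σ.symm n' ≤ σ.symm n)).card with hrk
  set D : ℕ → ℕ → ℕ → Finset ℕ :=
    fun k l q => (Δ k).filter (fun n => 2 * q * 2 ^ l < rk k n ∧ rk k n ≤ 2 * q * 2 ^ l + 2 ^ l)
    with hDdef
  set W : ℕ → X → ℝ := fun k x => ∑ l ∈ Finset.range (2 ^ (k + 1) + 1),
    Real.sqrt (∑ q ∈ Finset.range (2 ^ 2 ^ (k + 1)), ‖∑ n ∈ D k l q, a n • φ n x‖ ^ 2) with hWdef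
  have hΔ1 : ∀ k, ∀ n ∈ Δ k, 1 ≤ n := by
    intro k n hn
    rw [hΔdef] at hn
    simp only [Finset.mem_Icc] at hn
    omega
  -- Step A: pointwise maximal bound
  have stepA : ∀ (k m : ℕ) (x : X),
      ‖∑ n ∈ (Δ k).filter (fun n => σ.symm n ≤ m), a n • φ n x‖ ≤ W k x := by
    intro k m x
    rw [tandori_rank_filter_eq (Δ k) σ.symm m]
    have hcard : ((Δ k).filter (fun n => σ.symm n ≤ m)).card ≤ 2 ^ 2 ^ (k + 1) := by
      refine le_trans (Finset.card_le_card (Finset.filter_subset _ _)) ?_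
      calc (Δ k).card = ν (k + 1) + 1 - (ν k + 1) := by rw [hΔdef]; exact Nat.card_Icc _ _
      _ ≤ ν (k + 1) := by omega
      _ = 2 ^ 2 ^ (k + 1) := rfl
    have := tandori_dyadic_bound (Δ k) (fun n => a n • φ n x) (rk k)
      (fun n hn => Finset.card_pos.mpr ⟨n, Finset.mem_filter.mpr ⟨hn, le_rfl⟩⟩)
      (2 ^ (k + 1)) _ hcard
    exact this
  -- measurability
  have hUmeas : ∀ k l, AEStronglyMeasurable
      (fun x => Real.sqrt (∑ q ∈ Finset.range (2 ^ 2 ^ (k + 1)),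
        ‖∑ n ∈ D k l q, a n • φ n x‖ ^ 2)) μ := by
    intro k l
    have h1 : ∀ q, AEMeasurable (fun x => ‖∑ n ∈ D k l q, a n • φ n x‖ ^ 2) μ := by
      intro q
      have hsum : AEStronglyMeasurable (fun x => ∑ n ∈ D k l q, a n • φ n x) μ := by
        refine Finset.aestronglyMeasurable_fun_sum _ fun n hn => ?_
        have hn1 : 1 ≤ n := hΔ1 k n (Finset.mem_of_mem_filter n hn)
        exact ((hmem n hn1).aestronglyMeasurable).const_smul (a n)
      exact (hsum.norm.aemeasurable).pow_const 2
    exact (Real.continuous_sqrt.measurable.comp_aemeasurable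
      (Finset.aemeasurable_fun_sum _ fun q _ => h1 q)).aestronglyMeasurable
  have hWmeas : ∀ k, AEStronglyMeasurable (W k) μ := by
    intro k
    rw [hWdef]
    exact Finset.aestronglyMeasurable_fun_sum _ fun l _ => hUmeas k l
  have hWnn : ∀ k x, 0 ≤ W k x := by
    intro k x
    rw [hWdef]
    exact Finset.sum_nonneg fun l _ => Real.sqrt_nonneg _
  -- Step B: L² bound for W k
  set A : ℕ → ℝ := fun k => Real.sqrt (∑ n ∈ Δ k, ‖a n‖ ^ 2) with hAdef
  have stepB : ∀ k, eLpNorm (W k) 2 μ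
      ≤ ((2 ^ (k + 1) + 1 : ℕ) : ℝ≥0∞) * ENNReal.ofReal (A k) := by
    intro k
    have hdisjq : ∀ l q q', q ≠ q' → Disjoint (D k l q) (D k l q') := by
      intro l q q' hne
      rw [Finset.disjoint_left]
      intro n hn hn'
      rw [hDdef] at hn hn'
      simp only [Finset.mem_filter] at hn hn'
      obtain ⟨-, h1, h2⟩ := hn
      obtain ⟨-, h3, h4⟩ := hn'
      have hkey : ∀ u u' : ℕ, 2 * u' * 2 ^ l < rk k n → rk k n ≤ 2 * u * 2 ^ l + 2 ^ l → u' ≤ u := by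
        intro u u' hlt hle
        have h5 : 2 * u' * 2 ^ l < (2 * u + 1) * 2 ^ l := by
          calc 2 * u' * 2 ^ l < rk k n := hlt
          _ ≤ 2 * u * 2 ^ l + 2 ^ l := hle
          _ = (2 * u + 1) * 2 ^ l := by ring
        have h6 : 2 * u' < 2 * u + 1 := by
          by_contra hc
          push_neg at hc
          exact absurd (Nat.mul_le_mul_right (2 ^ l) hc) (by omega)
        omega
      have hq1 : q' ≤ q := hkey q q' h3 h2
      have hq2 : q ≤ q' := hkey q' q h1 h4
      omega
    have hU : ∀ l, eLpNorm (fun x => Real.sqrt (∑ q ∈ Finset.range (2 ^ 2 ^ (k + 1)),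
        ‖∑ n ∈ D k l q, a n • φ n x‖ ^ 2)) 2 μ ≤ ENNReal.ofReal (A k) := by
      intro l
      refine tandori_eLpNorm_sqrt_block_le a φ hmem horth (Δ k) (hΔ1 k) _ (D k l)
        (fun q => by rw [hDdef]; exact Finset.filter_subset _ _) (hdisjq l)
    have h0 : W k = ∑ l ∈ Finset.range (2 ^ (k + 1) + 1),
        (fun x => Real.sqrt (∑ q ∈ Finset.range (2 ^ 2 ^ (k + 1)),
          ‖∑ n ∈ D k l q, a n • φ n x‖ ^ 2)) := by
      rw [hWdef]
      funext x
      simp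
    rw [h0]
    refine le_trans (eLpNorm_sum_le (fun l _ => hUmeas k l) one_le_two) ?_
    refine le_trans (Finset.sum_le_sum fun l _ => hU l) ?_
    rw [Finset.sum_const, Finset.card_range, nsmul_eq_mul]
  -- Step C: summability of the bounds
  have hT : ∀ k, (2:ℝ) ^ k * A k
      ≤ Real.sqrt (∑ n ∈ Finset.Icc (2 ^ 2 ^ k + 1) (2 ^ 2 ^ (k + 1)),
          ‖a n‖ ^ 2 * (Real.logb 2 (n : ℝ)) ^ 2) := by
    intro k
    have hsum_le : ((2:ℝ) ^ k) ^ 2 * (∑ n ∈ Δ k, ‖a n‖ ^ 2)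
        ≤ ∑ n ∈ Finset.Icc (2 ^ 2 ^ k + 1) (2 ^ 2 ^ (k + 1)),
            ‖a n‖ ^ 2 * (Real.logb 2 (n : ℝ)) ^ 2 := by
      have hΔeq : Δ k = Finset.Icc (2 ^ 2 ^ k + 1) (2 ^ 2 ^ (k + 1)) := by
        simp only [hΔdef, hν]
      rw [hΔeq, Finset.mul_sum]
      refine Finset.sum_le_sum fun n hn => ?_
      simp only [Finset.mem_Icc] at hn
      have hlogb : (2:ℝ) ^ k ≤ Real.logb 2 (n : ℝ) := by
        have hn2 : ((2:ℝ) ^ (2 ^ k : ℕ)) ≤ (n : ℝ) := by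
          exact_mod_cast (show (2 ^ 2 ^ k : ℕ) ≤ n by omega)
        have h1 : Real.logb 2 ((2:ℝ) ^ (2 ^ k : ℕ)) = (2 ^ k : ℕ) := by
          rw [Real.logb_pow, Real.logb_self_eq_one (by norm_num : (1:ℝ) < 2)]
          simp
        calc (2:ℝ) ^ k = ((2 ^ k : ℕ) : ℝ) := by push_cast; ring
        _ = Real.logb 2 ((2:ℝ) ^ (2 ^ k : ℕ)) := h1.symm
        _ ≤ Real.logb 2 (n : ℝ) := Real.logb_le_logb_of_le (by norm_num)
            (by positivity) hn2
      have hsq : ((2:ℝ) ^ k) ^ 2 ≤ (Real.logb 2 (n : ℝ)) ^ 2 :=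
        pow_le_pow_left₀ (by positivity) hlogb 2
      calc ((2:ℝ) ^ k) ^ 2 * ‖a n‖ ^ 2 ≤ (Real.logb 2 (n : ℝ)) ^ 2 * ‖a n‖ ^ 2 :=
            mul_le_mul_of_nonneg_right hsq (sq_nonneg _)
      _ = ‖a n‖ ^ 2 * (Real.logb 2 (n : ℝ)) ^ 2 := by ring
    calc (2:ℝ) ^ k * A k
        = Real.sqrt (((2:ℝ) ^ k) ^ 2 * (∑ n ∈ Δ k, ‖a n‖ ^ 2)) := by
          rw [hAdef, Real.sqrt_mul (sq_nonneg _), Real.sqrt_sq (by positivity)]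
      _ ≤ _ := Real.sqrt_le_sqrt hsum_le
  set B : ℕ → ℝ≥0∞ := fun k => ENNReal.ofReal
    (3 * Real.sqrt (∑ n ∈ Finset.Icc (2 ^ 2 ^ k + 1) (2 ^ 2 ^ (k + 1)),
      ‖a n‖ ^ 2 * (Real.logb 2 (n : ℝ)) ^ 2)) with hBdef
  have hBsum : ∑' k, B k ≠ ⊤ := by
    rw [hBdef, ← ENNReal.ofReal_tsum_of_nonneg
      (fun k => by positivity) (hA.mul_left 3)]
    exact ENNReal.ofReal_ne_top
  have hBle : ∀ k, eLpNorm (W k) 2 μ ≤ B k := by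
    intro k
    refine le_trans (stepB k) ?_
    rw [hBdef]
    have hAnn : 0 ≤ A k := Real.sqrt_nonneg _
    have h1 : ((2 ^ (k + 1) + 1 : ℕ) : ℝ≥0∞) = ENNReal.ofReal ((2 ^ (k + 1) + 1 : ℕ) : ℝ) := by
      rw [ENNReal.ofReal_natCast]
    rw [h1, ← ENNReal.ofReal_mul (by positivity)]
    refine ENNReal.ofReal_le_ofReal ?_
    have h2 : ((2 ^ (k + 1) + 1 : ℕ) : ℝ) ≤ 3 * 2 ^ k := by
      push_cast
      have : (1:ℝ) ≤ 2 ^ k := one_le_pow₀ (by norm_num)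
      rw [pow_succ]
      linarith
    calc ((2 ^ (k + 1) + 1 : ℕ) : ℝ) * A k ≤ (3 * 2 ^ k) * A k :=
          mul_le_mul_of_nonneg_right h2 hAnn
      _ = 3 * ((2:ℝ) ^ k * A k) := by ring
      _ ≤ 3 * Real.sqrt (∑ n ∈ Finset.Icc (2 ^ 2 ^ k + 1) (2 ^ 2 ^ (k + 1)),
            ‖a n‖ ^ 2 * (Real.logb 2 (n : ℝ)) ^ 2) := by
          have := hT k
          linarith
  -- a.e. summability of the maximal bounds
  have hae := tandori_ae_summable W hWmeas hWnn B hBle hBsum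
  filter_upwards [hae] with x hx
  -- pointwise convergence via the Cauchy criterion
  refine cauchySeq_tendsto_of_complete ?_
  rw [Metric.cauchySeq_iff]
  intro ε hε
  obtain ⟨s₀, hs₀⟩ := summable_iff_vanishing.mp hx (Metric.ball 0 (ε / 4))
    (Metric.ball_mem_nhds 0 (by positivity))
  set K : ℕ := s₀.sup id + 1 with hKdef
  set M : ℕ := (Finset.Icc 1 (ν K)).sup σ.symm + 1 with hMdef
  have key : ∀ m m', M ≤ m → m ≤ m' →
      ‖(∑ n ∈ Finset.Icc 1 m', a (σ n) • φ (σ n) x)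
        - ∑ n ∈ Finset.Icc 1 m, a (σ n) • φ (σ n) x‖ < ε := by
    intro m m' hMm hmm'
    have hIccIoc : ∀ t : ℕ, Finset.Icc 1 t = Finset.Ioc 0 t := by
      intro t
      rw [← Finset.Icc_add_one_left_eq_Ioc, zero_add]
    have hdiff : (∑ n ∈ Finset.Icc 1 m', a (σ n) • φ (σ n) x)
        - ∑ n ∈ Finset.Icc 1 m, a (σ n) • φ (σ n) x
        = ∑ n ∈ Finset.Ioc m m', a (σ n) • φ (σ n) x := by
      rw [hIccIoc, hIccIoc, ← Finset.sum_Ioc_consecutive _ (Nat.zero_le m) hmm']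
      abel
    rw [hdiff]
    set T : Finset ℕ := (Finset.Ioc m m').image σ with hTdef
    have himg : ∑ n ∈ Finset.Ioc m m', a (σ n) • φ (σ n) x = ∑ n' ∈ T, a n' • φ n' x := by
      rw [hTdef, Finset.sum_image (fun i _ j _ h => σ.injective h)]
    set J : ℕ := (Finset.Ioc m m').sup σ with hJdef
    set K' : ℕ := max K J with hK'def
    have hTprop : ∀ n' ∈ T, 2 ^ 2 ^ K < n' ∧ n' ≤ 2 ^ 2 ^ K' := by
      intro n' hn'
      rw [hTdef] at hn'
      obtain ⟨n, hn, rfl⟩ := Finset.mem_image.mp hn'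
      simp only [Finset.mem_Ioc] at hn
      have hsymm : σ.symm (σ n) = n := σ.symm_apply_apply n
      constructor
      · by_contra hc
        push_neg at hc
        have h1 : 1 ≤ σ n := by
          rcases Nat.eq_zero_or_pos (σ n) with h | h
          · have : n = 0 := by
              have := σ.injective (h.trans hσ0.symm)
              exact this
            omega
          · exact h
        have h2 : σ n ∈ Finset.Icc 1 (ν K) := Finset.mem_Icc.mpr ⟨h1, hc⟩
        
        have h3 : σ.symm (σ n) ≤ (Finset.Icc 1 (ν K)).sup σ.symm := Finset.le_sup h2
        rw [hsymm] at h3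
        omega
      · have h1 : σ n ≤ J := Finset.le_sup (Finset.mem_Ioc.mpr hn)
        have h2 : J ≤ 2 ^ 2 ^ J := by
          calc J ≤ 2 ^ J := Nat.le_of_lt (Nat.lt_two_pow_self)
          _ ≤ 2 ^ 2 ^ J := Nat.pow_le_pow_right (by norm_num)
              (Nat.le_of_lt (Nat.lt_two_pow_self))
        have h3 : (2:ℕ) ^ 2 ^ J ≤ 2 ^ 2 ^ K' := tandori_nu_mono (le_max_right K J)
        omega
    have hTeq : T = (Finset.Ico K K').biUnion
        (fun k => (Δ k).filter (fun n'' => m < σ.symm n'' ∧ σ.symm n'' ≤ m')) := by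
      ext n'
      constructor
      · intro hn'
        obtain ⟨hlow, hhigh⟩ := hTprop n' hn'
        rw [hTdef] at hn'
        obtain ⟨n, hn, rfl⟩ := Finset.mem_image.mp hn'
        simp only [Finset.mem_Ioc] at hn
        obtain ⟨k, hk1, hk2, hk3, hk4⟩ := tandori_nu_cover K' K (σ n)
          (le_max_left K J) hlow hhigh
        refine Finset.mem_biUnion.mpr ⟨k, Finset.mem_Ico.mpr ⟨hk1, hk2⟩, ?_⟩
        refine Finset.mem_filter.mpr ⟨?_, ?_⟩
        · rw [hΔdef]
          simp only [hν]
          exact Finset.mem_Icc.mpr ⟨by omega, hk4⟩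
        · rw [σ.symm_apply_apply]
          exact ⟨hn.1, hn.2⟩
      · intro hn'
        obtain ⟨k, hk, hmem'⟩ := Finset.mem_biUnion.mp hn'
        obtain ⟨hΔmem, h1, h2⟩ := Finset.mem_filter.mp hmem'
        rw [hTdef]
        refine Finset.mem_image.mpr ⟨σ.symm n', Finset.mem_Ioc.mpr ⟨h1, h2⟩, ?_⟩
        exact σ.apply_symm_apply n'
    have hblockdisj : ∀ k k', k < k' → Disjoint (Δ k) (Δ k') := by
      intro k k' hkk'
      rw [Finset.disjoint_left]
      intro n hn hn'
      rw [hΔdef] at hn hn'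
      simp only [Finset.mem_Icc] at hn hn'
      simp only [hν] at hn hn'
      have : (2:ℕ) ^ 2 ^ (k + 1) ≤ 2 ^ 2 ^ k' := tandori_nu_mono hkk'
      omega
    have hbiUdisj : Set.PairwiseDisjoint ↑(Finset.Ico K K')
        (fun k => (Δ k).filter (fun n'' => m < σ.symm n'' ∧ σ.symm n'' ≤ m')) := by
      intro k _ k' _ hne
      have h : Disjoint (Δ k) (Δ k') := by
        rcases Nat.lt_or_ge k k' with h | h
        · exact hblockdisj k k' h
        · exact (hblockdisj k' k (by omega)).symm
      exact Finset.disjoint_filter_filter h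
    rw [himg, hTeq, Finset.sum_biUnion hbiUdisj]
    have hpiece : ∀ k, ‖∑ n ∈ (Δ k).filter (fun n'' => m < σ.symm n'' ∧ σ.symm n'' ≤ m'),
        a n • φ n x‖ ≤ 2 * W k x := by
      intro k
      have hsetdiff : (Δ k).filter (fun n'' => m < σ.symm n'' ∧ σ.symm n'' ≤ m')
          = (Δ k).filter (fun n'' => σ.symm n'' ≤ m') \ (Δ k).filter (fun n'' => σ.symm n'' ≤ m) := by
        ext n
        simp only [Finset.mem_filter, Finset.mem_sdiff]
        constructor
        · rintro ⟨hn, h1, h2⟩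
          exact ⟨⟨hn, h2⟩, fun hc => absurd hc.2 (by omega)⟩
        · rintro ⟨⟨hn, h2⟩, hc⟩
          refine ⟨hn, ?_, h2⟩
          by_contra hc2
          push_neg at hc2
          exact hc ⟨hn, hc2⟩
      have hsub : (Δ k).filter (fun n'' => σ.symm n'' ≤ m)
          ⊆ (Δ k).filter (fun n'' => σ.symm n'' ≤ m') :=
        Finset.monotone_filter_right _ (fun n _ hn => le_trans hn hmm')
      rw [hsetdiff, Finset.sum_sdiff_eq_sub hsub]
      refine le_trans (norm_sub_le _ _) ?_
      have h1 := stepA k m' x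
      have h2 := stepA k m x
      linarith
    have hfinal : ‖∑ k ∈ Finset.Ico K K',
        ∑ n ∈ (Δ k).filter (fun n'' => m < σ.symm n'' ∧ σ.symm n'' ≤ m'), a n • φ n x‖
        ≤ 2 * ∑ k ∈ Finset.Ico K K', W k x := by
      refine le_trans (norm_sum_le _ _) ?_
      rw [Finset.mul_sum]
      exact Finset.sum_le_sum fun k _ => hpiece k
    have hdisjs₀ : Disjoint (Finset.Ico K K') s₀ := by
      rw [Finset.disjoint_left]
      intro k hk hks₀
      have h1 : k ∈ Finset.Ico K K' := hk
      have h2 : K ≤ k := (Finset.mem_Ico.mp h1).1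
      have h3 : k ≤ s₀.sup id := Finset.le_sup (f := id) hks₀
      omega
    have hvan := hs₀ (Finset.Ico K K') hdisjs₀
    rw [Metric.mem_ball, dist_zero_right, Real.norm_eq_abs] at hvan
    have hsumnn : 0 ≤ ∑ k ∈ Finset.Ico K K', W k x :=
      Finset.sum_nonneg fun k _ => hWnn k x
    have : ∑ k ∈ Finset.Ico K K', W k x < ε / 4 := lt_of_abs_lt hvan
    calc ‖∑ k ∈ Finset.Ico K K',
        ∑ n ∈ (Δ k).filter (fun n'' => m < σ.symm n'' ∧ σ.symm n'' ≤ m'), a n • φ n x‖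
        ≤ 2 * ∑ k ∈ Finset.Ico K K', W k x := hfinal
      _ < 2 * (ε / 4) := by linarith
      _ < ε := by linarith
  refine ⟨M, fun m1 hm1 m2 hm2 => ?_⟩
  rcases le_total m1 m2 with h | h
  · rw [dist_eq_norm, norm_sub_rev]
    exact key m1 m2 hm1 h
  · rw [dist_eq_norm]
    exact key m2 m1 hm2 h
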